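/- Proposition (Taylor expansion of the symbol of the operator L^k for symplectic ERKN coefficients): Suppose the ERKN coefficients satisfy the symplecticity conditions with d₁ = 1 and let L be the scalar symbol defined below, analytic near z = 0. Then: (i) if a = ω (resp. a = −ω), then L(0) = 0, L'(0) = 2ihω (resp. L'(0) = −2ihω) and L''(0) = 2hω·cot(hω); (ii) for arbitrary real a, L(0) = 4hω·csc(hω)·sin((h/2)(ω + a))·sin((h/2)(ω − a)) and L'(0) = 2ihω·csc(hω)·sin(ha). -/

import Mathlib

noncomputable section

/-- `sinc x = sin x / x`, with `sinc 0 = 1`. -/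
def sinc (x : ℝ) : ℝ := if x = 0 then 1 else Real.sin x / x

/-- the scalar symbol L₁ of the operator L₁^k at frequency ω and phase a = k·ω -/
def symbL1 (h ω a : ℝ) (b1 bb1 : ℝ) (z : ℂ) : ℂ :=
  (Complex.exp (Complex.I * (h * a : ℝ)) * Complex.exp z - (Real.cos (h * ω) : ℂ)
      - ((h * ω * Real.sin (h * ω) * (bb1 / b1) : ℝ) : ℂ)) /
    (((bb1 / b1 : ℝ) : ℂ) * (Complex.exp (Complex.I * (h * a : ℝ)) * Complex.exp z
        - (Real.cos (h * ω) : ℂ)) + ((sinc (h * ω) : ℝ) : ℂ))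

/-- the scalar symbol L₂ of the operator L₂^k -/
def symbL2 (h ω a : ℝ) (c1 b1 bb1 : ℝ) (z : ℂ) : ℂ :=
  ((Real.cos (c1 * h * ω) : ℝ) : ℂ) + ((c1 * sinc (c1 * h * ω) : ℝ) : ℂ) * symbL1 h ω a b1 bb1 z

/-- the scalar symbol L of the operator L^k -/
def symbL (h ω a : ℝ) (c1 b1 bb1 : ℝ) (z : ℂ) : ℂ :=
  (Complex.exp (Complex.I * (h * a : ℝ)) * Complex.exp z - (Real.cos (h * ω) : ℂ)
      - ((sinc (h * ω) : ℝ) : ℂ) * symbL1 h ω a b1 bb1 z) /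
    ((bb1 : ℂ) * symbL2 h ω a c1 b1 bb1 z)

/-- Taylor expansion at z = 0 of the scalar symbol L of the operator
L^k for ERKN coefficients satisfying the symplecticity conditions with d₁ = 1. -/
lemma symb_closed (E c s X B1 B2 C2 S2 : ℂ) (hE : E ≠ 0) (hX : X ≠ 0) (hs : s ≠ 0)
    (hB1 : B1 ≠ 0) (hB2 : B2 ≠ 0)
    (hcs : c^2 + s^2 = 1) (hB : B1^2 + X^2*B2^2 = 1)
    (hQ : B2/B1*(E-c) + s/X ≠ 0)
    (h1 : c*B1 + X*s*B2 = C2) (h2 : s/X*B1 - c*B2 = S2) :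
    (E - c - s/X * ((E - c - X*s*(B2/B1)) / (B2/B1*(E-c)+s/X))) /
     (B2 * (C2 + S2 * ((E - c - X*s*(B2/B1)) / (B2/B1*(E-c)+s/X))))
    = X/s * (E + E⁻¹ - 2*c) := by
  set Q : ℂ := B2/B1*(E-c) + s/X with hQdef
  set D : ℂ := X*B2*(E-c) + s*B1 with hDdef
  have hQD : Q = D/(X*B1) := by rw [hQdef, hDdef]; field_simp
  have hD : D ≠ 0 := by
    intro h0
    exact hQ (by rw [hQD, h0, zero_div])
  have hL1 : (E - c - X*s*(B2/B1))/Q = X*(B1*(E-c) - X*s*B2)/D := by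
    rw [hQD, div_div_eq_mul_div, div_eq_div_iff (by exact hD) hD]
    field_simp
  have hL2 : C2 + S2 * ((E - c - X*s*(B2/B1))/Q) = s*E/D := by
    rw [hL1, ← h1, ← h2, eq_div_iff hD]
    field_simp
    linear_combination (s*E) * hB
  have hN : E - c - s/X * ((E - c - X*s*(B2/B1))/Q) = X*B2*(E^2 - 2*c*E + 1)/D := by
    rw [hL1, eq_div_iff hD]
    field_simp
    linear_combination (X*B2) * hcs
  have hne : B2 * (s*E/D) ≠ 0 := mul_ne_zero hB2 (div_ne_zero (mul_ne_zero hs hE) hD)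
  rw [hN, hL2, div_eq_iff hne]
  field_simp
  ring

lemma sinc_of_ne (x : ℝ) (hx : x ≠ 0) : sinc x = Real.sin x / x := by
  unfold sinc; rw [if_neg hx]

lemma mul_sinc (x : ℝ) : x * sinc x = Real.sin x := by
  unfold sinc
  split_ifs with h
  · simp [h]
  · field_simp

lemma symbL_eq_closed (h ω a c1 b1 bb1 : ℝ) (z : ℂ)
    (hx : h * ω ≠ 0) (hs : Real.sin (h * ω) ≠ 0) (hb1 : b1 ≠ 0) (hb2 : bb1 ≠ 0)
    (key1 : Real.cos (h*ω) * b1 + h*ω*Real.sin (h*ω) * bb1 = Real.cos (c1*h*ω))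
    (key2 : Real.sin (h*ω)/(h*ω) * b1 - Real.cos (h*ω) * bb1 = c1 * sinc (c1*h*ω))
    (hBr : b1^2 + (h*ω)^2 * bb1^2 = 1)
    (hq : ((bb1 / b1 : ℝ) : ℂ) * (Complex.exp (Complex.I * (h * a : ℝ)) * Complex.exp z
        - (Real.cos (h * ω) : ℂ)) + ((sinc (h * ω) : ℝ) : ℂ) ≠ 0) :
    symbL h ω a c1 b1 bb1 z
      = ((h*ω : ℝ) : ℂ) / ((Real.sin (h*ω) : ℝ) : ℂ) *
        (Complex.exp (Complex.I * (h * a : ℝ)) * Complex.exp z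
          + (Complex.exp (Complex.I * (h * a : ℝ)) * Complex.exp z)⁻¹
          - 2 * ((Real.cos (h*ω) : ℝ) : ℂ)) := by
  have hE : Complex.exp (Complex.I * (h * a : ℝ)) * Complex.exp z ≠ 0 :=
    mul_ne_zero (Complex.exp_ne_zero _) (Complex.exp_ne_zero _)
  have hXC : ((h*ω : ℝ) : ℂ) ≠ 0 := Complex.ofReal_ne_zero.2 hx
  have hsC : ((Real.sin (h*ω) : ℝ) : ℂ) ≠ 0 := Complex.ofReal_ne_zero.2 hs
  have hB1C : ((b1 : ℝ) : ℂ) ≠ 0 := Complex.ofReal_ne_zero.2 hb1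
  have hB2C : ((bb1 : ℝ) : ℂ) ≠ 0 := Complex.ofReal_ne_zero.2 hb2
  have hcsC : ((Real.cos (h*ω) : ℝ) : ℂ)^2 + ((Real.sin (h*ω) : ℝ) : ℂ)^2 = 1 := by
    have := Real.cos_sq_add_sin_sq (h*ω)
    exact_mod_cast this
  have hBC : ((b1 : ℝ) : ℂ)^2 + ((h*ω : ℝ) : ℂ)^2 * ((bb1 : ℝ) : ℂ)^2 = 1 := by
    exact_mod_cast hBr
  have h1C : ((Real.cos (h*ω) : ℝ) : ℂ) * (b1 : ℂ)
      + ((h*ω : ℝ) : ℂ) * ((Real.sin (h*ω) : ℝ) : ℂ) * (bb1 : ℂ)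
      = ((Real.cos (c1*h*ω) : ℝ) : ℂ) := by exact_mod_cast key1
  have h2C : ((Real.sin (h*ω) : ℝ) : ℂ) / ((h*ω : ℝ) : ℂ) * (b1 : ℂ)
      - ((Real.cos (h*ω) : ℝ) : ℂ) * (bb1 : ℂ)
      = ((c1 : ℝ) : ℂ) * ((sinc (c1*h*ω) : ℝ) : ℂ) := by exact_mod_cast key2
  unfold symbL symbL2 symbL1
  rw [sinc_of_ne (h*ω) hx]
  rw [sinc_of_ne (h*ω) hx] at hq
  push_cast
  push_cast at hE hXC hsC hcsC hBC h1C h2C hq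
  exact symb_closed _ _ _ _ _ _ _ _ hE hXC hsC hB1C hB2C hcsC hBC hq h1C h2C

theorem symbL_taylor_symplectic
    (h ω a : ℝ) (hh : 0 < h) (hω : 0 < ω) (hsin : Real.sin (h * ω) ≠ 0)
    (c1 : ℝ) (hc1 : c1 ∈ Set.Icc (0 : ℝ) 1) (b1f bb1f : ℝ → ℝ)
    -- symplecticity conditions with d₁ = 1
    (hsympl : ∀ x : ℝ, 0 ≤ x →
      Real.cos x * b1f x + x ^ 2 * sinc x * bb1f x = Real.cos (c1 * x) ∧
      sinc x * b1f x - Real.cos x * bb1f x = c1 * sinc (c1 * x))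
    (hb1 : b1f (h * ω) ≠ 0)
    -- the denominators of L₁ and L at z = 0 do not vanish
    (hden1 : ((bb1f (h * ω) / b1f (h * ω) : ℝ) : ℂ) *
        (Complex.exp (Complex.I * (h * a : ℝ)) - (Real.cos (h * ω) : ℂ))
        + ((sinc (h * ω) : ℝ) : ℂ) ≠ 0)
    (hden2 : ((bb1f (h * ω) : ℝ) : ℂ) *
        symbL2 h ω a c1 (b1f (h * ω)) (bb1f (h * ω)) 0 ≠ 0) :
    -- (i) for a = ±ω
    ((a = ω ∨ a = -ω) →
      symbL h ω a c1 (b1f (h * ω)) (bb1f (h * ω)) 0 = 0) ∧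
    (a = ω →
      deriv (symbL h ω a c1 (b1f (h * ω)) (bb1f (h * ω))) 0 = 2 * Complex.I * (h * ω : ℝ) ∧
      iteratedDeriv 2 (symbL h ω a c1 (b1f (h * ω)) (bb1f (h * ω))) 0 =
        ((2 * h * ω * (Real.cos (h * ω) / Real.sin (h * ω)) : ℝ) : ℂ)) ∧
    (a = -ω →
      deriv (symbL h ω a c1 (b1f (h * ω)) (bb1f (h * ω))) 0 = -(2 * Complex.I * (h * ω : ℝ)) ∧
      iteratedDeriv 2 (symbL h ω a c1 (b1f (h * ω)) (bb1f (h * ω))) 0 =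
        ((2 * h * ω * (Real.cos (h * ω) / Real.sin (h * ω)) : ℝ) : ℂ)) ∧
    -- (ii) for arbitrary real a
    (symbL h ω a c1 (b1f (h * ω)) (bb1f (h * ω)) 0 =
      ((4 * h * ω * (Real.sin (h * ω))⁻¹ *
        Real.sin (h / 2 * (ω + a)) * Real.sin (h / 2 * (ω - a)) : ℝ) : ℂ)) ∧
    (deriv (symbL h ω a c1 (b1f (h * ω)) (bb1f (h * ω))) 0 =
      2 * Complex.I * ((h * ω * (Real.sin (h * ω))⁻¹ * Real.sin (h * a) : ℝ) : ℂ)) := by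
  have hx : h * ω ≠ 0 := (mul_pos hh hω).ne'
  set b1 := b1f (h * ω) with hb1def
  set bb1 := bb1f (h * ω) with hbb1def
  have hbb1 : bb1 ≠ 0 := by
    intro h0
    apply hden2
    rw [h0]
    simp
  obtain ⟨e1, e2⟩ := hsympl (h * ω) (mul_pos hh hω).le
  rw [← mul_assoc] at e1 e2
  have key1 : Real.cos (h*ω) * b1 + h*ω*Real.sin (h*ω) * bb1 = Real.cos (c1*h*ω) := by
    linear_combination e1 - (h*ω)*bb1*(mul_sinc (h*ω))
  have key2 : Real.sin (h*ω)/(h*ω) * b1 - Real.cos (h*ω) * bb1 = c1 * sinc (c1*h*ω) := by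
    rw [← sinc_of_ne (h*ω) hx]; exact e2
  have key2' : Real.sin (h*ω) * b1 - (h*ω)*Real.cos (h*ω) * bb1 = Real.sin (c1*h*ω) := by
    linear_combination (h*ω)*e2 - b1*(mul_sinc (h*ω)) + mul_sinc (c1*h*ω)
  have hBr : b1^2 + (h*ω)^2 * bb1^2 = 1 := by
    have p := Real.sin_sq_add_cos_sq (h*ω)
    have p2 := Real.sin_sq_add_cos_sq (c1*h*ω)
    linear_combination (Real.cos (h*ω)*b1 + h*ω*Real.sin (h*ω)*bb1 + Real.cos (c1*h*ω))*key1
      + (Real.sin (h*ω)*b1 - h*ω*Real.cos (h*ω)*bb1 + Real.sin (c1*h*ω))*key2'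
      - (b1^2+(h*ω)^2*bb1^2)*p + p2
  -- closed form
  set w : ℂ := Complex.I * ((h * a : ℝ) : ℂ) with hwdef
  set cc : ℂ := ((Real.cos (h*ω) : ℝ) : ℂ) with hccdef
  set K : ℂ := ((h*ω : ℝ) : ℂ) / ((Real.sin (h*ω) : ℝ) : ℂ) with hKdef
  set F : ℂ → ℂ := fun z => K * (Complex.exp w * Complex.exp z
      + (Complex.exp w * Complex.exp z)⁻¹ - 2 * cc) with hFdef
  have hbridge : ∀ z : ℂ, ((bb1 / b1 : ℝ) : ℂ) * (Complex.exp w * Complex.exp z - cc)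
      + ((sinc (h * ω) : ℝ) : ℂ) ≠ 0 → symbL h ω a c1 b1 bb1 z = F z :=
    fun z hz => symbL_eq_closed h ω a c1 b1 bb1 z hx hsin hb1 hbb1 key1 key2 hBr hz
  have hcont : Continuous (fun z : ℂ => ((bb1 / b1 : ℝ) : ℂ) *
      (Complex.exp w * Complex.exp z - cc) + ((sinc (h * ω) : ℝ) : ℂ)) := by
    fun_prop
  have h0ne : ((bb1 / b1 : ℝ) : ℂ) * (Complex.exp w * Complex.exp 0 - cc)
      + ((sinc (h * ω) : ℝ) : ℂ) ≠ 0 := by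
    simpa using hden1
  have hev : ∀ᶠ z in nhds (0:ℂ), ((bb1 / b1 : ℝ) : ℂ) *
      (Complex.exp w * Complex.exp z - cc) + ((sinc (h * ω) : ℝ) : ℂ) ≠ 0 :=
    hcont.continuousAt.eventually_ne h0ne
  have heq : symbL h ω a c1 b1 bb1 =ᶠ[nhds (0:ℂ)] F := hev.mono fun z hz => hbridge z hz
  -- rewrite F via exponential of sums
  have hFG : F = fun z => K * (Complex.exp (w+z) + Complex.exp (-(w+z)) - 2*cc) := by
    funext z
    rw [hFdef]
    simp only [← Complex.exp_add, ← Complex.exp_neg]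
  -- derivatives of the closed form
  have hasD : ∀ z : ℂ, HasDerivAt F (K * (Complex.exp (w+z) - Complex.exp (-(w+z)))) z := by
    intro z
    rw [hFG]
    have h1 : HasDerivAt (fun z : ℂ => Complex.exp (w+z)) (Complex.exp (w+z)) z := by
      simpa using (((hasDerivAt_id z).const_add w).cexp)
    have h2 : HasDerivAt (fun z : ℂ => Complex.exp (-(w+z))) (-Complex.exp (-(w+z))) z := by
      simpa using ((((hasDerivAt_id z).const_add w).neg).cexp)
    have := ((h1.add h2).sub_const (2*cc)).const_mul K
    simpa [mul_sub, mul_add, sub_eq_add_neg] using this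
  set G1 : ℂ → ℂ := fun z => K * (Complex.exp (w+z) - Complex.exp (-(w+z))) with hG1def
  have hasD1 : ∀ z : ℂ, HasDerivAt G1 (K * (Complex.exp (w+z) + Complex.exp (-(w+z)))) z := by
    intro z
    rw [hG1def]
    have h1 : HasDerivAt (fun z : ℂ => Complex.exp (w+z)) (Complex.exp (w+z)) z := by
      simpa using (((hasDerivAt_id z).const_add w).cexp)
    have h2 : HasDerivAt (fun z : ℂ => Complex.exp (-(w+z))) (-Complex.exp (-(w+z))) z := by
      simpa using ((((hasDerivAt_id z).const_add w).neg).cexp)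
    have := (h1.sub h2).const_mul K
    simpa [mul_sub, mul_add, sub_neg_eq_add] using this
  have hderivF : deriv F = G1 := funext fun z => (hasD z).deriv
  -- exp(w), exp(-w)
  have e1exp : Complex.exp w = Complex.cos ((h*a : ℝ):ℂ) + Complex.sin ((h*a : ℝ):ℂ) * Complex.I := by
    rw [hwdef, mul_comm, Complex.exp_mul_I]
  have e2exp : Complex.exp (-w) = Complex.cos ((h*a : ℝ):ℂ) - Complex.sin ((h*a : ℝ):ℂ) * Complex.I := by
    have hnw : -w = (-((h*a : ℝ):ℂ)) * Complex.I := by rw [hwdef]; ring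
    rw [hnw, Complex.exp_mul_I, Complex.cos_neg, Complex.sin_neg]
    ring
  have hsum : Complex.exp w + Complex.exp (-w) = 2 * ((Real.cos (h*a) : ℝ) : ℂ) := by
    rw [e1exp, e2exp]
    push_cast
    ring
  have hdiff : Complex.exp w - Complex.exp (-w) =
      2 * ((Real.sin (h*a) : ℝ) : ℂ) * Complex.I := by
    rw [e1exp, e2exp]
    push_cast
    ring
  -- the three quantities
  have hval : symbL h ω a c1 b1 bb1 0 = K * (2 * ((Real.cos (h*a) : ℝ) : ℂ) - 2*cc) := by
    rw [heq.eq_of_nhds, hFdef]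
    simp only [Complex.exp_zero, mul_one, ← Complex.exp_neg]
    rw [← hsum]
  have hder : deriv (symbL h ω a c1 b1 bb1) 0 =
      K * (2 * ((Real.sin (h*a) : ℝ) : ℂ) * Complex.I) := by
    rw [heq.deriv_eq, (hasD 0).deriv, add_zero, ← hdiff]
  have hder2 : iteratedDeriv 2 (symbL h ω a c1 b1 bb1) 0 = K * (2 * ((Real.cos (h*a) : ℝ) : ℂ)) := by
    rw [show (2:ℕ) = 1 + 1 from rfl, iteratedDeriv_succ, iteratedDeriv_one]
    have hder_ev : deriv (symbL h ω a c1 b1 bb1) =ᶠ[nhds (0:ℂ)] deriv F := heq.deriv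
    rw [hder_ev.deriv_eq, hderivF, (hasD1 0).deriv, add_zero, ← hsum]
  -- (ii) closed evaluations
  have hii1 : symbL h ω a c1 b1 bb1 0 =
      ((4 * h * ω * (Real.sin (h * ω))⁻¹ *
        Real.sin (h / 2 * (ω + a)) * Real.sin (h / 2 * (ω - a)) : ℝ) : ℂ) := by
    have hcc2 := Real.cos_sub_cos (h*a) (h*ω)
    rw [show (h*a+h*ω)/2 = h/2*(ω+a) by ring, show (h*a-h*ω)/2 = -(h/2*(ω-a)) by ring,
      Real.sin_neg] at hcc2
    have hreal : (h*ω)/Real.sin (h*ω)*(2*Real.cos (h*a) - 2*Real.cos (h*ω)) =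
        4*h*ω*(Real.sin (h*ω))⁻¹*Real.sin (h/2*(ω+a))*Real.sin (h/2*(ω-a)) := by
      linear_combination (2*(h*ω)/Real.sin (h*ω))*hcc2
    rw [hval, ← hreal, hKdef, hccdef]
    push_cast
    ring
  have hii2 : deriv (symbL h ω a c1 b1 bb1) 0 =
      2 * Complex.I * ((h * ω * (Real.sin (h * ω))⁻¹ * Real.sin (h * a) : ℝ) : ℂ) := by
    rw [hder, hKdef]
    push_cast
    rw [div_eq_mul_inv]
    ring
  refine ⟨?_, ?_, ?_, hii1, hii2⟩
  · rintro (ha | ha)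
    · rw [hii1, ha, show h/2*(ω-ω) = 0 by ring, Real.sin_zero, mul_zero, Complex.ofReal_zero]
    · rw [hii1, ha, show h/2*(ω + -ω) = 0 by ring, Real.sin_zero, mul_zero, zero_mul,
        Complex.ofReal_zero]
  · intro ha
    constructor
    · rw [hii2, ha, show h*ω*(Real.sin (h*ω))⁻¹*Real.sin (h*ω) = h*ω by field_simp]
    · rw [hder2, ha, hKdef]
      push_cast
      ring
  · intro ha
    constructor
    · rw [hii2, ha, show h*(-ω) = -(h*ω) by ring, Real.sin_neg,
        show h*ω*(Real.sin (h*ω))⁻¹*(-Real.sin (h*ω)) = -(h*ω) by field_simp]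
      push_cast
      ring
    · rw [hder2, ha, show h*(-ω) = -(h*ω) by ring, Real.cos_neg, hKdef]
      push_cast
      ring
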